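/- arXiv:1303.4488 — 2 statements merged into one kernel-verified Lean document; each statement's English description precedes it below -/
import Mathlib

section
/- Let p ∈ (3, ∞) and q ∈ [1, ∞). There exists a constant C depending only on p and q such that: for every continuously differentiable f : ℝ³ → ℝ with f ∈ L^q(ℝ³), |∇f| ∈ L^p(ℝ³), and finite BMO seminorm [f]_{BMO}, and for every r ∈ (0, 1), one has for every x ∈ ℝ³ the bound |f(x)| ≤ C ( r^{1−3/p} ‖∇f‖_{L^p(ℝ³)} + (1 + |ln r|) [f]_{BMO} + ‖f‖_{L^q(ℝ³)} ). -/
open MeasureTheory Metric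
open scoped ENNReal

noncomputable section

/-- Euclidean three-space. -/
abbrev E3 := EuclideanSpace ℝ (Fin 3)

/-- The set of averages over balls of |g − (average of g)|, whose supremum is the BMO
seminorm of g. -/
def bmoSet (g : E3 → ℝ) : Set ℝ :=
  { m : ℝ | ∃ (x : E3) (ρ : ℝ), 0 < ρ ∧
      m = ⨍ y in Metric.ball x ρ, |g y - ⨍ z in Metric.ball x ρ, g z| }

/-- The BMO seminorm of g : ℝ³ → ℝ, the supremum over all centers x and radii ρ > 0 of
the average over B_ρ(x) of |g − g_{B_ρ(x)}|. -/
def bmoSeminorm (g : E3 → ℝ) : ℝ := sSup (bmoSet g)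

lemma holder_ball (g : E3 → ℝ) (hg : Continuous g) (hgnn : ∀ z, 0 ≤ g z) {p : ℝ} (hp : 1 ≤ p)
    (hfin : eLpNorm g (ENNReal.ofReal p) volume ≠ ⊤) (x : E3) (s : ℝ) :
    ∫ z in ball x s, g z ≤
      (eLpNorm g (ENNReal.ofReal p) volume).toReal * (volume (ball x s)).toReal ^ (1 - 1/p) := by
  set P := ENNReal.ofReal p with hP
  have hPt : P.toReal = p := ENNReal.toReal_ofReal (by linarith)
  have hP1 : 1 ≤ P := by
    rw [hP, ← ENNReal.ofReal_one]; exact ENNReal.ofReal_le_ofReal hp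
  have hmB : MeasurableSet (ball x s) := measurableSet_ball
  have hint : IntegrableOn g (ball x s) := (hg.continuousOn.integrableOn_compact
    (isCompact_closedBall x s)).mono_set ball_subset_closedBall
  have h1 : eLpNorm g 1 (volume.restrict (ball x s)) ≤
      eLpNorm g P (volume.restrict (ball x s)) *
        (volume.restrict (ball x s) Set.univ) ^ (1/(1:ℝ≥0∞).toReal - 1/P.toReal) :=
    eLpNorm_le_eLpNorm_mul_rpow_measure_univ hP1 hg.aestronglyMeasurable
  have h2 : eLpNorm g P (volume.restrict (ball x s)) ≤ eLpNorm g P volume :=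
    eLpNorm_mono_measure g Measure.restrict_le_self
  have huniv : volume.restrict (ball x s) Set.univ = volume (ball x s) :=
    Measure.restrict_apply_univ _
  have hexp : 1/(1:ℝ≥0∞).toReal - 1/P.toReal = 1 - 1/p := by
    simp [hPt]
  have h3 : eLpNorm g 1 (volume.restrict (ball x s)) ≤
      eLpNorm g P volume * (volume (ball x s)) ^ (1 - 1/p) := by
    refine h1.trans ?_
    rw [huniv, hexp]
    exact mul_le_mul_left h2 _
  have hlhs : ∫ z in ball x s, g z = (eLpNorm g 1 (volume.restrict (ball x s))).toReal := by
    rw [eLpNorm_one_eq_lintegral_enorm]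
    rw [integral_eq_lintegral_of_nonneg_ae (Filter.Eventually.of_forall fun z => hgnn z)
      hg.aestronglyMeasurable.restrict]
    congr 1
    refine lintegral_congr fun a => ?_
    rw [← Real.enorm_eq_ofReal (hgnn a)]
  have hfin2 : eLpNorm g P volume * (volume (ball x s)) ^ (1 - 1/p) ≠ ⊤ := by
    apply ENNReal.mul_ne_top hfin
    exact (ENNReal.rpow_lt_top_of_nonneg (by rw [sub_nonneg]; rw [div_le_one (by linarith)]; linarith) measure_ball_lt_top.ne).ne
  calc ∫ z in ball x s, g z = (eLpNorm g 1 (volume.restrict (ball x s))).toReal := hlhs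
    _ ≤ (eLpNorm g P volume * (volume (ball x s)) ^ (1 - 1/p)).toReal :=
        ENNReal.toReal_mono hfin2 h3
    _ = (eLpNorm g P volume).toReal * (volume (ball x s)).toReal ^ (1 - 1/p) := by
        rw [ENNReal.toReal_mul, ENNReal.toReal_rpow]

lemma E3ball_vol (x : E3) {s : ℝ} (hs : 0 ≤ s) :
    volume (ball x s) = ENNReal.ofReal (s^3) * volume (ball (0:E3) 1) := by
  rw [Measure.addHaar_ball volume x hs, finrank_euclideanSpace_fin]

lemma E3ball_vol_toReal (x : E3) {s : ℝ} (hs : 0 ≤ s) :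
    (volume (ball x s)).toReal = s^3 * (volume (ball (0:E3) 1)).toReal := by
  rw [E3ball_vol x hs, ENNReal.toReal_mul, ENNReal.toReal_ofReal (by positivity)]

lemma kappa_pos : 0 < (volume (ball (0:E3) 1)).toReal :=
  ENNReal.toReal_pos (measure_ball_pos volume 0 one_pos).ne' measure_ball_lt_top.ne

lemma E3ball_vol_pos (x : E3) {s : ℝ} (hs : 0 < s) : 0 < (volume (ball x s)).toReal := by
  rw [E3ball_vol_toReal x hs.le]
  exact mul_pos (by positivity) kappa_pos

lemma cont_integrableOn_ball {f : E3 → ℝ} (hf : Continuous f) (x : E3) (s : ℝ) :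
    IntegrableOn f (ball x s) :=
  (hf.continuousOn.integrableOn_compact (isCompact_closedBall x s)).mono_set
    ball_subset_closedBall

lemma bmo_avg_nonneg (f : E3 → ℝ) (x : E3) (ρ : ℝ) :
    0 ≤ ⨍ y in ball x ρ, |f y - ⨍ z in ball x ρ, f z| := by
  rw [setAverage_eq]
  exact smul_nonneg (by positivity)
    (setIntegral_nonneg measurableSet_ball fun y _ => abs_nonneg _)

lemma bmo_nonneg {f : E3 → ℝ} (hb : BddAbove (bmoSet f)) : 0 ≤ bmoSeminorm f :=
  le_trans (bmo_avg_nonneg f 0 1) (le_csSup hb ⟨0, 1, one_pos, rfl⟩)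

lemma bmo_step {f : E3 → ℝ} (hf : Continuous f) (hb : BddAbove (bmoSet f)) (x : E3)
    {ρ : ℝ} (hρ : 0 < ρ) :
    |(⨍ y in ball x ρ, f y) - ⨍ y in ball x (2*ρ), f y| ≤ 8 * bmoSeminorm f := by
  set a := ⨍ y in ball x (2*ρ), f y with ha
  set V1 := (volume (ball x ρ)).toReal with hV1
  set V2 := (volume (ball x (2*ρ))).toReal with hV2
  have hV1pos : 0 < V1 := E3ball_vol_pos x hρ
  have hV2pos : 0 < V2 := E3ball_vol_pos x (by linarith)
  have hV21 : V2 = 8 * V1 := by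
    rw [hV1, hV2, E3ball_vol_toReal x hρ.le, E3ball_vol_toReal x (by linarith : (0:ℝ) ≤ 2*ρ)]
    ring
  have hint1 : IntegrableOn f (ball x ρ) := cont_integrableOn_ball hf x ρ
  have hint2 : IntegrableOn (fun y => |f y - a|) (ball x (2*ρ)) :=
    ((cont_integrableOn_ball hf x (2*ρ)).sub
      (integrableOn_const measure_ball_lt_top.ne)).abs
  have e1 : (⨍ y in ball x ρ, f y) - a = V1⁻¹ * ∫ y in ball x ρ, (f y - a) := by
    rw [integral_sub hint1 (integrableOn_const measure_ball_lt_top.ne),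
      setIntegral_const, setAverage_eq, smul_eq_mul, smul_eq_mul, measureReal_def, mul_sub, ← hV1,
      inv_mul_cancel_left₀ hV1pos.ne']
  have e2 : |(⨍ y in ball x ρ, f y) - a| ≤ V1⁻¹ * ∫ y in ball x (2*ρ), |f y - a| := by
    rw [e1, abs_mul, abs_of_nonneg (by positivity : (0:ℝ) ≤ V1⁻¹)]
    refine mul_le_mul_of_nonneg_left ?_ (by positivity)
    refine le_trans (by simpa [Real.norm_eq_abs] using
      norm_integral_le_integral_norm (μ := volume.restrict (ball x ρ)) (fun y => f y - a)) ?_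
    exact setIntegral_mono_set hint2
      (Filter.Eventually.of_forall fun y => abs_nonneg _)
      ((ball_subset_ball (by linarith)).eventuallyLE)
  have e3 : V1⁻¹ * ∫ y in ball x (2*ρ), |f y - a| = 8 * ⨍ y in ball x (2*ρ), |f y - a| := by
    rw [setAverage_eq, smul_eq_mul, measureReal_def, ← hV2, hV21]
    field_simp
  have e4 : (⨍ y in ball x (2*ρ), |f y - a|) ≤ bmoSeminorm f :=
    le_csSup hb ⟨x, 2*ρ, by linarith, rfl⟩
  calc |(⨍ y in ball x ρ, f y) - a| ≤ V1⁻¹ * ∫ y in ball x (2*ρ), |f y - a| := e2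
    _ = 8 * ⨍ y in ball x (2*ρ), |f y - a| := e3
    _ ≤ 8 * bmoSeminorm f := by linarith [e4]

lemma bmo_tele {f : E3 → ℝ} (hf : Continuous f) (hb : BddAbove (bmoSet f)) (x : E3)
    {ρ : ℝ} (hρ : 0 < ρ) (n : ℕ) :
    |(⨍ y in ball x ρ, f y) - ⨍ y in ball x (2^n * ρ), f y| ≤ 8 * n * bmoSeminorm f := by
  induction n with
  | zero => simp
  | succ n ih =>
      have h2 : (2:ℝ)^(n+1) * ρ = 2 * (2^n * ρ) := by ring
      have hstep := bmo_step hf hb x (show 0 < 2^n * ρ by positivity)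
      rw [h2]
      have := abs_sub_le (⨍ y in ball x ρ, f y) (⨍ y in ball x (2^n * ρ), f y)
        (⨍ y in ball x (2 * (2^n * ρ)), f y)
      have hnn : 0 ≤ bmoSeminorm f := bmo_nonneg hb
      push_cast
      nlinarith [ih]

lemma avg_tail {q : ℝ} (hq : 1 ≤ q) {f : E3 → ℝ} (hf : Continuous f)
    (hfin : eLpNorm f (ENNReal.ofReal q) volume ≠ ⊤) (x : E3) {s : ℝ} (hs : 1 ≤ s) :
    |⨍ y in ball x s, f y| ≤
      (volume (ball (0:E3) 1)).toReal ^ (-(1/q)) * (eLpNorm f (ENNReal.ofReal q) volume).toReal := by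
  set N := (eLpNorm f (ENNReal.ofReal q) volume).toReal with hN
  have hNnn : 0 ≤ N := ENNReal.toReal_nonneg
  set V := (volume (ball x s)).toReal with hV
  have hVpos : 0 < V := E3ball_vol_pos x (by linarith)
  set κ := (volume (ball (0:E3) 1)).toReal with hκ
  have hκV : κ ≤ V := by
    rw [hV, E3ball_vol_toReal x (by linarith : (0:ℝ) ≤ s)]
    nlinarith [kappa_pos, pow_le_pow_left₀ (by norm_num : (0:ℝ) ≤ 1) hs 3]
  have habs : eLpNorm (fun y => |f y|) (ENNReal.ofReal q) volume = eLpNorm f (ENNReal.ofReal q) volume := by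
    simpa [Real.norm_eq_abs] using eLpNorm_norm (p := ENNReal.ofReal q) (μ := volume) f
  have h1 : |⨍ y in ball x s, f y| ≤ V⁻¹ * (N * V ^ (1 - 1/q)) := by
    rw [setAverage_eq, smul_eq_mul, measureReal_def, ← hV, abs_mul, abs_of_nonneg (by positivity : (0:ℝ) ≤ V⁻¹)]
    refine mul_le_mul_of_nonneg_left ?_ (by positivity)
    calc |∫ y in ball x s, f y| ≤ ∫ y in ball x s, |f y| := by
          simpa [Real.norm_eq_abs] using
            norm_integral_le_integral_norm (μ := volume.restrict (ball x s)) f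
      _ ≤ N * V ^ (1 - 1/q) := by
          have := holder_ball (fun y => |f y|) hf.abs (fun z => abs_nonneg _) hq
            (by rw [habs]; exact hfin) x s
          rwa [habs] at this
  refine h1.trans ?_
  have h2 : V⁻¹ * V ^ (1 - 1/q) = V ^ (-(1/q)) := by
    rw [← Real.rpow_neg_one V, ← Real.rpow_add hVpos]
    ring_nf
  have h3 : V ^ (-(1/q)) ≤ κ ^ (-(1/q)) :=
    Real.rpow_le_rpow_of_nonpos kappa_pos hκV (by rw [neg_nonpos]; positivity)
  calc V⁻¹ * (N * V ^ (1 - 1/q)) = V ^ (-(1/q)) * N := by rw [← h2]; ring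
    _ ≤ κ ^ (-(1/q)) * N := mul_le_mul_of_nonneg_right h3 hNnn

-- Step A: segment FTC bound
lemma segment_bound {f : E3 → ℝ} (hf : ContDiff ℝ 1 f) (x y : E3) {r : ℝ} (hy : y ∈ ball x r) :
    |f x - f y| ≤ ∫ t in Set.Ioc (0:ℝ) 1, ‖fderiv ℝ f (x + t • (y - x))‖ * r := by
  have hdiff := hf.differentiable one_ne_zero
  have hgc : Continuous fun z => fderiv ℝ f z := hf.continuous_fderiv one_ne_zero
  have hc : ∀ t : ℝ, HasDerivAt (fun t : ℝ => x + t • (y - x)) (y - x) t := by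
    intro t
    simpa using ((hasDerivAt_id t).smul_const (y - x)).const_add x
  have hφ : ∀ t : ℝ, HasDerivAt (fun t : ℝ => f (x + t • (y - x)))
      (fderiv ℝ f (x + t • (y - x)) (y - x)) t := fun t =>
    ((hdiff (x + t • (y - x))).hasFDerivAt).comp_hasDerivAt t (hc t)
  have hcurve : Continuous fun t : ℝ => x + t • (y - x) :=
    continuous_const.add (continuous_id.smul continuous_const)
  have hD : Continuous fun t : ℝ => fderiv ℝ f (x + t • (y - x)) (y - x) :=
    (hgc.comp hcurve).clm_apply continuous_const
  have hkey : f y - f x = ∫ t in (0:ℝ)..1, fderiv ℝ f (x + t • (y - x)) (y - x) := by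
    have := intervalIntegral.integral_eq_sub_of_hasDerivAt
      (f := fun t : ℝ => f (x + t • (y - x)))
      (f' := fun t : ℝ => fderiv ℝ f (x + t • (y - x)) (y - x))
      (fun t _ => hφ t) (hD.intervalIntegrable 0 1)
    rw [this]; simp
  have hyr : ‖y - x‖ ≤ r := by
    rw [← dist_eq_norm]
    exact (mem_ball.mp hy).le
  rw [← intervalIntegral.integral_of_le zero_le_one]
  calc |f x - f y| = |∫ t in (0:ℝ)..1, fderiv ℝ f (x + t • (y - x)) (y - x)| := by
        rw [abs_sub_comm, hkey]
    _ ≤ ∫ t in (0:ℝ)..1, |fderiv ℝ f (x + t • (y - x)) (y - x)| :=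
        intervalIntegral.abs_integral_le_integral_abs zero_le_one
    _ ≤ ∫ t in (0:ℝ)..1, ‖fderiv ℝ f (x + t • (y - x))‖ * r := by
        refine intervalIntegral.integral_mono_on zero_le_one
          (hD.abs.intervalIntegrable 0 1)
          (((hgc.comp hcurve).norm.mul continuous_const).intervalIntegrable 0 1)
          (fun t _ => ?_)
        calc |fderiv ℝ f (x + t • (y - x)) (y - x)|
            = ‖fderiv ℝ f (x + t • (y - x)) (y - x)‖ := (Real.norm_eq_abs _).symm
          _ ≤ ‖fderiv ℝ f (x + t • (y - x))‖ * ‖y - x‖ :=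
              (fderiv ℝ f (x + t • (y - x))).le_opNorm _
          _ ≤ ‖fderiv ℝ f (x + t • (y - x))‖ * r :=
              mul_le_mul_of_nonneg_left hyr (norm_nonneg _)

lemma scale_int (g : E3 → ℝ) (x : E3) {r t : ℝ} (hr : 0 < r) (ht : 0 < t) :
    ∫ y in ball x r, g (x + t • (y - x)) = (t^3)⁻¹ * ∫ z in ball x (t*r), g z := by
  have hmem : ∀ y : E3, (x + t • (y - x) ∈ ball x (t*r)) ↔ y ∈ ball x r := by
    intro y
    simp only [mem_ball, dist_eq_norm]
    rw [add_sub_cancel_left, norm_smul, Real.norm_eq_abs, abs_of_pos ht]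
    exact mul_lt_mul_iff_right₀ ht
  have h1 : (fun y => (ball x r).indicator (fun y => g (x + t • (y - x))) y)
      = fun y => (ball x (t*r)).indicator g (x + t • (y - x)) := by
    funext y
    by_cases hy : y ∈ ball x r
    · rw [Set.indicator_of_mem hy, Set.indicator_of_mem ((hmem y).mpr hy)]
    · rw [Set.indicator_of_notMem hy, Set.indicator_of_notMem (fun h => hy ((hmem y).mp h))]
  have h2 : ∫ y in ball x r, g (x + t • (y - x)) =
      ∫ y, (ball x (t*r)).indicator g (x + t • (y - x)) := by
    rw [← integral_indicator measurableSet_ball, h1]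
  set h := (ball x (t*r)).indicator g with hh
  have haff : ∀ y : E3, x + t • (y - x) = t • (y + t⁻¹ • (x - t • x)) := by
    intro y
    rw [smul_add, smul_smul, mul_inv_cancel₀ ht.ne', one_smul, smul_sub]
    abel
  have h3 : ∫ y, h (x + t • (y - x)) = ∫ y, h (t • y) := by
    simp_rw [haff]
    exact integral_add_right_eq_self (fun y => h (t • y)) (t⁻¹ • (x - t • x))
  have h4 : ∫ y, h (t • y) = |((t^(Module.finrank ℝ E3)):ℝ)⁻¹| • ∫ y, h y :=
    Measure.integral_comp_smul volume h t
  rw [h2, h3, h4, finrank_euclideanSpace_fin, ← integral_indicator measurableSet_ball,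
    smul_eq_mul, abs_of_pos (by positivity)]

lemma morrey {p : ℝ} (hp : 3 < p) {f : E3 → ℝ} (hf : ContDiff ℝ 1 f)
    (hfin : eLpNorm (fun y => ‖fderiv ℝ f y‖) (ENNReal.ofReal p) volume ≠ ⊤)
    {r : ℝ} (hr : 0 < r) (x : E3) :
    |f x - ⨍ y in ball x r, f y| ≤
      ((volume (ball (0:E3) 1)).toReal ^ (-(1/p)) * (p/(p-3))) * r ^ (1-3/p) *
        (eLpNorm (fun y => ‖fderiv ℝ f y‖) (ENNReal.ofReal p) volume).toReal := by
  set κ := (volume (ball (0:E3) 1)).toReal with hκ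
  set g : E3 → ℝ := fun y => ‖fderiv ℝ f y‖ with hg
  set N := (eLpNorm g (ENNReal.ofReal p) volume).toReal with hN
  have hNnn : 0 ≤ N := ENNReal.toReal_nonneg
  have hgc : Continuous g := (hf.continuous_fderiv one_ne_zero).norm
  have hgnn : ∀ z, 0 ≤ g z := fun z => norm_nonneg _
  set V := (volume (ball x r)).toReal with hV
  have hVpos : 0 < V := E3ball_vol_pos x hr
  have hVval : V = r^3 * κ := E3ball_vol_toReal x hr.le
  set B := ball x r with hB
  -- product measure setup
  set μB := volume.restrict B with hμB
  set ν := volume.restrict (Set.Ioc (0:ℝ) 1) with hν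
  haveI : IsFiniteMeasure μB := ⟨by rw [Measure.restrict_apply_univ]; exact measure_ball_lt_top⟩
  haveI : IsFiniteMeasure ν := ⟨by
    rw [Measure.restrict_apply_univ, Real.volume_Ioc]; exact ENNReal.ofReal_lt_top⟩
  set F : E3 → ℝ → ℝ := fun y t => g (x + t • (y - x)) * r with hF
  have hFc : Continuous (Function.uncurry F) := by
    apply Continuous.mul _ continuous_const
    exact hgc.comp (continuous_const.add (continuous_snd.smul
      (continuous_fst.sub continuous_const)))
  obtain ⟨M, hM⟩ := (isCompact_closedBall x r).exists_bound_of_continuousOn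
    hgc.continuousOn
  have hFint : Integrable (Function.uncurry F) (μB.prod ν) := by
    refine Integrable.mono' (integrable_const (M * r)) hFc.aestronglyMeasurable ?_
    have hprod : μB.prod ν = (volume.prod volume).restrict (B ×ˢ Set.Ioc (0:ℝ) 1) :=
      Measure.prod_restrict _ _
    rw [hprod]
    filter_upwards [ae_restrict_mem (measurableSet_ball.prod measurableSet_Ioc)] with z hz
    obtain ⟨hzy, hzt⟩ := hz
    have hmem : x + z.2 • (z.1 - x) ∈ closedBall x r := by
      rw [mem_closedBall, dist_eq_norm, add_sub_cancel_left, norm_smul, Real.norm_eq_abs,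
        abs_of_pos hzt.1]
      calc z.2 * ‖z.1 - x‖ ≤ 1 * r := by
            apply mul_le_mul hzt.2 _ (norm_nonneg _) zero_le_one
            rw [← dist_eq_norm]; exact (mem_ball.mp hzy).le
        _ = r := one_mul r
    have := hM _ hmem
    rw [Real.norm_eq_abs, Function.uncurry_apply_pair, hF]
    rw [abs_mul, abs_of_pos hr, abs_of_nonneg (hgnn _)]
    apply mul_le_mul_of_nonneg_right _ hr.le
    calc g (x + z.2 • (z.1 - x)) = ‖g (x + z.2 • (z.1 - x))‖ :=
          (Real.norm_of_nonneg (hgnn _)).symm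
      _ ≤ M := this
  -- step 1: reduce to double integral
  have hintf : IntegrableOn f B := cont_integrableOn_ball (hf.continuous) x r
  have e1 : f x - ⨍ y in B, f y = V⁻¹ * ∫ y in B, (f x - f y) := by
    rw [integral_sub (integrableOn_const (C := f x) measure_ball_lt_top.ne) hintf,
      setIntegral_const, setAverage_eq, smul_eq_mul, smul_eq_mul, measureReal_def, mul_sub, ← hV,
      inv_mul_cancel_left₀ hVpos.ne']
  have hInner : Integrable (fun y => ∫ t, F y t ∂ν) μB := hFint.integral_prod_left
  have e2 : |f x - ⨍ y in B, f y| ≤ V⁻¹ * ∫ y in B, (∫ t, F y t ∂ν) := by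
    rw [e1, abs_mul, abs_of_nonneg (by positivity : (0:ℝ) ≤ V⁻¹)]
    refine mul_le_mul_of_nonneg_left ?_ (by positivity)
    calc |∫ y in B, (f x - f y)| ≤ ∫ y in B, |f x - f y| := by
          simpa [Real.norm_eq_abs] using
            norm_integral_le_integral_norm (μ := volume.restrict B) (fun y => f x - f y)
      _ ≤ ∫ y in B, (∫ t, F y t ∂ν) := by
          refine setIntegral_mono_on ((integrable_const (f x)).sub hintf).abs hInner
            measurableSet_ball (fun y hy => ?_)
          exact segment_bound hf x y hy
  have e3 : ∫ y in B, (∫ t, F y t ∂ν) = ∫ t in Set.Ioc (0:ℝ) 1, (∫ y in B, F y t) :=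
    integral_integral_swap hFint
  set K := N * κ^(1-(1:ℝ)/p) * r^(4-3/p) with hK
  have hp1 : (0:ℝ) < p := by linarith
  have hKnn : 0 ≤ K := by
    apply mul_nonneg (mul_nonneg hNnn _) _
    · positivity
    · positivity
  have e5 : ∀ t ∈ Set.Ioc (0:ℝ) 1, ∫ y in B, F y t ≤ K * t^(-3/p) := by
    intro t ht
    obtain ⟨ht0, ht1⟩ := ht
    have hscale : ∫ y in B, g (x + t • (y - x)) = (t^3)⁻¹ * ∫ z in ball x (t*r), g z :=
      scale_int g x hr ht0
    have hhold : ∫ z in ball x (t*r), g z ≤ N * ((t*r)^3 * κ)^(1-1/p) := by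
      have := holder_ball g hgc hgnn (by linarith : 1 ≤ p) hfin x (t*r)
      rwa [E3ball_vol_toReal x (by positivity : (0:ℝ) ≤ t*r), ← hκ, ← hN] at this
    have step1 : ∫ y in B, F y t = (∫ y in B, g (x + t • (y - x))) * r := by
      rw [hF]; exact integral_mul_const r _
    have step2 : ∫ y in B, F y t ≤ (t^3)⁻¹ * (N * ((t*r)^3 * κ)^(1-1/p)) * r := by
      rw [step1, hscale]
      apply mul_le_mul_of_nonneg_right _ hr.le
      apply mul_le_mul_of_nonneg_left hhold (by positivity)
    refine step2.trans (le_of_eq ?_)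
    have hrw1 : ((t*r)^3 * κ)^(1-(1:ℝ)/p) = t^(3*(1-1/p)) * r^(3*(1-1/p)) * κ^(1-(1:ℝ)/p) := by
      rw [Real.mul_rpow (by positivity) kappa_pos.le, ← Real.rpow_natCast (t*r) 3,
        ← Real.rpow_mul (by positivity), Real.mul_rpow ht0.le hr.le]
      push_cast
      ring_nf
      rw [← hκ]
    have hrw2 : ((t:ℝ)^3)⁻¹ = t^(-(3:ℝ)) := by
      rw [← Real.rpow_natCast t 3, ← Real.rpow_neg ht0.le]
      norm_num
    rw [hrw1, hrw2, hK]
    have hrr : r^(3*(1-1/p)) * r = r^(4-3/p) := by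
      nth_rewrite 2 [← Real.rpow_one r]
      rw [← Real.rpow_add hr]
      congr 1
      ring
    have htt : t^(-(3:ℝ)) * t^(3*(1-1/p)) = t^(-3/p) := by
      rw [← Real.rpow_add ht0]
      congr 1
      ring
    rw [show t^(-(3:ℝ)) * (N * (t^(3*(1-1/p)) * r^(3*(1-1/p)) * κ^(1-(1:ℝ)/p))) * r
      = N * κ^(1-(1:ℝ)/p) * (r^(3*(1-1/p)) * r) * (t^(-(3:ℝ)) * t^(3*(1-1/p))) by ring]
    rw [hrr, htt]
  have hInner2 : Integrable (fun t => ∫ y, F y t ∂μB) ν := hFint.integral_prod_right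
  have hrpowint : IntegrableOn (fun t : ℝ => K * t^(-3/p)) (Set.Ioc (0:ℝ) 1) := by
    have h1 : IntervalIntegrable (fun t : ℝ => t^(-3/p)) volume 0 1 :=
      intervalIntegral.intervalIntegrable_rpow' (by
        have h3p : (3:ℝ)/p < 1 := by rw [div_lt_iff₀ hp1]; linarith
        have hd : (-3:ℝ)/p = -(3/p) := by ring
        linarith)
    exact ((intervalIntegrable_iff_integrableOn_Ioc_of_le zero_le_one).mp h1).const_mul K
  have e6 : ∫ t in Set.Ioc (0:ℝ) 1, (∫ y in B, F y t) ≤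
      ∫ t in Set.Ioc (0:ℝ) 1, K * t^(-3/p) := by
    refine setIntegral_mono_on ?_ hrpowint measurableSet_Ioc e5
    exact hInner2
  have e7 : ∫ t in Set.Ioc (0:ℝ) 1, (t:ℝ)^(-3/p) = p/(p-3) := by
    rw [← intervalIntegral.integral_of_le zero_le_one,
      integral_rpow (Or.inl (by
        have h3p : (3:ℝ)/p < 1 := by rw [div_lt_iff₀ hp1]; linarith
        have hd : (-3:ℝ)/p = -(3/p) := by ring
        linarith))]
    have h3p : (3:ℝ)/p < 1 := by rw [div_lt_iff₀ hp1]; linarith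
    have hd : (-3:ℝ)/p = -(3/p) := by ring
    rw [Real.one_rpow, Real.zero_rpow (by intro h; linarith)]
    field_simp
    ring
  have efinal : |f x - ⨍ y in B, f y| ≤ V⁻¹ * (K * (p/(p-3))) := by
    refine e2.trans ?_
    apply mul_le_mul_of_nonneg_left _ (by positivity)
    rw [e3]
    refine e6.trans (le_of_eq ?_)
    rw [MeasureTheory.integral_const_mul, e7]
  refine efinal.trans (le_of_eq ?_)
  rw [hVval, hK]
  have hrw3 : ((r:ℝ)^3 * κ)⁻¹ = (r^3)⁻¹ * κ⁻¹ := by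
    rw [mul_inv]
  have hrw4 : κ⁻¹ * κ^(1-(1:ℝ)/p) = κ^(-(1/p)) := by
    rw [← Real.rpow_neg_one κ, ← Real.rpow_add kappa_pos]
    ring_nf
    rw [← hκ]
  have hrw5 : ((r:ℝ)^3)⁻¹ * r^(4-3/p) = r^(1-3/p) := by
    rw [← Real.rpow_natCast r 3, ← Real.rpow_neg hr.le, ← Real.rpow_add hr]
    norm_num
    congr 1
    ring
  rw [hrw3]
  rw [show (r^3)⁻¹ * κ⁻¹ * (N * κ^(1-(1:ℝ)/p) * r^(4-3/p) * (p/(p-3)))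
    = (κ⁻¹ * κ^(1-(1:ℝ)/p)) * ((r^3)⁻¹ * r^(4-3/p)) * (p/(p-3)) * N by ring]
  rw [hrw4, hrw5]
  ring


/-- for p ∈ (3,∞) and q ∈ [1,∞) there is a constant C depending only on
p and q such that for every C¹ function f ∈ L^q(ℝ³) with |∇f| ∈ L^p(ℝ³) and finite BMO
seminorm, and every r ∈ (0,1),
|f(x)| ≤ C(r^{1−3/p}‖∇f‖_{L^p} + (1 + |ln r|)[f]_BMO + ‖f‖_{L^q}) for every x. -/
theorem pointwise_bound_bmo_grad (p q : ℝ) (hp : 3 < p) (hq : 1 ≤ q) :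
    ∃ C : ℝ, ∀ f : E3 → ℝ,
      ContDiff ℝ 1 f →
      MemLp f (ENNReal.ofReal q) volume →
      MemLp (fun x => ‖fderiv ℝ f x‖) (ENNReal.ofReal p) volume →
      BddAbove (bmoSet f) →
      ∀ r : ℝ, 0 < r → r < 1 → ∀ x : E3,
        |f x| ≤ C * (r ^ (1 - 3 / p)
            * (eLpNorm (fun y => ‖fderiv ℝ f y‖) (ENNReal.ofReal p) volume).toReal
          + (1 + |Real.log r|) * bmoSeminorm f
          + (eLpNorm f (ENNReal.ofReal q) volume).toReal) := by
  set κ := (volume (ball (0:E3) 1)).toReal with hκ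
  set CM := κ ^ (-(1/p)) * (p/(p-3)) with hCM
  set Cq := κ ^ (-(1/q)) with hCq
  refine ⟨max CM (max 16 Cq), ?_⟩
  intro f hf hfq hfp hb r hr0 hr1 x
  set C := max CM (max 16 Cq) with hC
  have hC16 : (16:ℝ) ≤ C := le_trans (le_max_left _ _) (le_max_right _ _)
  have hCM' : CM ≤ C := le_max_left _ _
  have hCq' : Cq ≤ C := le_trans (le_max_right _ _) (le_max_right _ _)
  set Np := (eLpNorm (fun y => ‖fderiv ℝ f y‖) (ENNReal.ofReal p) volume).toReal with hNp
  set Nq := (eLpNorm f (ENNReal.ofReal q) volume).toReal with hNq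
  set S := bmoSeminorm f with hS
  have hSnn : 0 ≤ S := bmo_nonneg hb
  have hNpnn : 0 ≤ Np := ENNReal.toReal_nonneg
  have hNqnn : 0 ≤ Nq := ENNReal.toReal_nonneg
  have hfinp : eLpNorm (fun y => ‖fderiv ℝ f y‖) (ENNReal.ofReal p) volume ≠ ⊤ := hfp.2.ne
  have hfinq : eLpNorm f (ENNReal.ofReal q) volume ≠ ⊤ := hfq.2.ne
  set n := ⌈Real.logb 2 r⁻¹⌉₊ with hn
  set s := 2^n * r with hs
  have hrinv1 : (1:ℝ) ≤ r⁻¹ := by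
    rw [le_inv_comm₀ one_pos hr0]
    simpa using hr1.le
  have hlogbnn : 0 ≤ Real.logb 2 r⁻¹ := Real.logb_nonneg one_lt_two hrinv1
  have h2n : (r:ℝ)⁻¹ ≤ 2^n := by
    calc (r:ℝ)⁻¹ = 2 ^ Real.logb 2 r⁻¹ :=
          (Real.rpow_logb two_pos (by norm_num) (by positivity)).symm
      _ ≤ 2 ^ ((n:ℝ)) := Real.rpow_le_rpow_of_exponent_le one_le_two (Nat.le_ceil _)
      _ = 2^n := by rw [Real.rpow_natCast]
  have hs1 : (1:ℝ) ≤ s := by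
    rw [hs]
    calc (1:ℝ) = r⁻¹ * r := (inv_mul_cancel₀ hr0.ne').symm
      _ ≤ 2^n * r := mul_le_mul_of_nonneg_right h2n hr0.le
  have hlogr : Real.log r < 0 := Real.log_neg hr0 hr1
  have habslog : |Real.log r| = -Real.log r := abs_of_neg hlogr
  have hlog2 : (1:ℝ)/2 < Real.log 2 := by
    have := Real.log_two_gt_d9
    linarith
  have hlogb_le : Real.logb 2 r⁻¹ ≤ 2 * |Real.log r| := by
    rw [Real.logb, Real.log_inv, habslog]
    rw [div_le_iff₀ (by linarith)]
    nlinarith [neg_nonneg.mpr hlogr.le]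
  have hnle : (n:ℝ) ≤ 2*(1 + |Real.log r|) := by
    have h1 : (n:ℝ) < Real.logb 2 r⁻¹ + 1 := Nat.ceil_lt_add_one hlogbnn
    have h2 : (0:ℝ) ≤ |Real.log r| := abs_nonneg _
    linarith
  -- the three pieces
  have T1 := morrey hp hf hfinp hr0 x
  have T2 := bmo_tele (hf.continuous) hb x hr0 n
  have T3 := avg_tail hq (hf.continuous) hfinq x hs1
  rw [← hκ, ← hCM, ← hNp] at T1
  rw [← hS] at T2
  rw [← hκ, ← hCq, ← hNq] at T3
  -- triangle inequality
  have htri : |f x| ≤ |f x - ⨍ y in ball x r, f y|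
      + |(⨍ y in ball x r, f y) - ⨍ y in ball x s, f y|
      + |⨍ y in ball x s, f y| := by
    have := abs_add_le (f x - ⨍ y in ball x r, f y)
      ((⨍ y in ball x r, f y) - ⨍ y in ball x s, f y)
    have h2 := abs_add_le ((f x - ⨍ y in ball x r, f y)
      + ((⨍ y in ball x r, f y) - ⨍ y in ball x s, f y)) (⨍ y in ball x s, f y)
    have h3 : f x = (f x - ⨍ y in ball x r, f y)
      + ((⨍ y in ball x r, f y) - ⨍ y in ball x s, f y) + ⨍ y in ball x s, f y := by ring
    calc |f x| = |(f x - ⨍ y in ball x r, f y)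
        + ((⨍ y in ball x r, f y) - ⨍ y in ball x s, f y) + ⨍ y in ball x s, f y| := by
          rw [← h3]
      _ ≤ _ := by
          refine h2.trans ?_
          linarith
  have hrpnn : 0 ≤ r ^ ((1:ℝ) - 3/p) := Real.rpow_nonneg hr0.le _
  have hmid : 8 * (n:ℝ) * S ≤ C * ((1 + |Real.log r|) * S) := by
    have h16 : 8*(n:ℝ) ≤ 16*(1+|Real.log r|) := by linarith
    calc 8*(n:ℝ)*S ≤ 16*(1+|Real.log r|)*S :=
          mul_le_mul_of_nonneg_right h16 hSnn
      _ ≤ C * ((1+|Real.log r|)*S) := by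
          rw [show (16:ℝ)*(1+|Real.log r|)*S = 16*((1+|Real.log r|)*S) by ring]
          apply mul_le_mul_of_nonneg_right hC16
          have : (0:ℝ) ≤ 1 + |Real.log r| := by positivity
          positivity
  have hleft : CM * r ^ ((1:ℝ)-3/p) * Np ≤ C * (r ^ ((1:ℝ)-3/p) * Np) := by
    rw [show CM * r ^ ((1:ℝ)-3/p) * Np = CM * (r ^ ((1:ℝ)-3/p) * Np) by ring]
    apply mul_le_mul_of_nonneg_right hCM' (by positivity)
  have hright : Cq * Nq ≤ C * Nq :=
    mul_le_mul_of_nonneg_right hCq' hNqnn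
  calc |f x| ≤ |f x - ⨍ y in ball x r, f y|
      + |(⨍ y in ball x r, f y) - ⨍ y in ball x s, f y|
      + |⨍ y in ball x s, f y| := htri
    _ ≤ CM * r ^ ((1:ℝ)-3/p) * Np + 8 * (n:ℝ) * S + Cq * Nq := by
        have h1 := add_le_add (add_le_add T1 T2) T3
        linarith
    _ ≤ C * (r ^ ((1:ℝ)-3/p) * Np) + C * ((1 + |Real.log r|) * S) + C * Nq := by
        linarith
    _ = C * (r ^ ((1:ℝ)-3/p) * Np + (1 + |Real.log r|) * S + Nq) := by ring

end
end

section
/- There exists an absolute constant C > 0 such that for every M ≥ 0 and every twice continuously differentiable compactly supported g : ℝ³ → ℝ³ with |g(x)| ≤ M for all x ∈ ℝ³, one has ∫_{ℝ³} |∇g|⁶ dx ≤ C M² ∫_{ℝ³} |∇g|² |∇²g|² dx. -/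
open MeasureTheory

noncomputable section

/-- The j-th partial derivative of a scalar function on ℝ³. -/
def pder (j : Fin 3) (f : E3 → ℝ) : E3 → ℝ :=
  fun x => fderiv ℝ f x (EuclideanSpace.single j 1)

/-- |∇v|², the squared Euclidean norm of the gradient of v : ℝ³ → ℝ³. -/
def grad2 (v : E3 → E3) (x : E3) : ℝ :=
  ∑ i : Fin 3, ∑ j : Fin 3, (pder j (fun y => v y i) x) ^ 2

/-- |∇²v|², the squared norm of the second derivatives of v : ℝ³ → ℝ³. -/
def hess2 (v : E3 → E3) (x : E3) : ℝ :=
  ∑ i : Fin 3, ∑ j : Fin 3, ∑ k : Fin 3, (pder k (pder j (fun y => v y i)) x) ^ 2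

/-- |∇³v|², the squared norm of the third derivatives of v : ℝ³ → ℝ³. -/
def third2 (v : E3 → E3) (x : E3) : ℝ :=
  ∑ i : Fin 3, ∑ j : Fin 3, ∑ k : Fin 3, ∑ l : Fin 3,
    (pder l (pder k (pder j (fun y => v y i))) x) ^ 2

/-! ### Auxiliary lemmas -/

lemma contDiff_pder {n : ℕ} {f : E3 → ℝ} (hf : ContDiff ℝ (n+1) f) (j : Fin 3) :
    ContDiff ℝ n (pder j f) := by
  have : pder j f = (fun L : E3 →L[ℝ] ℝ => L (EuclideanSpace.single j 1)) ∘ fderiv ℝ f := rfl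
  rw [this]
  exact (ContinuousLinearMap.apply ℝ ℝ (EuclideanSpace.single j 1)).contDiff.comp
    (hf.fderiv_right (m := n) le_rfl)

lemma contDiff_pder_one {f : E3 → ℝ} (hf : ContDiff ℝ 2 f) (j : Fin 3) :
    ContDiff ℝ 1 (pder j f) := by
  exact contDiff_pder (n := 1) (hf.of_le (by norm_cast)) j

lemma continuous_pder {f : E3 → ℝ} (hf : ContDiff ℝ 1 f) (j : Fin 3) :
    Continuous (pder j f) := by
  exact (contDiff_pder (n := 0) (hf.of_le (by norm_cast)) j).continuous

lemma hcs_pder {f : E3 → ℝ} (hf : HasCompactSupport f) (j : Fin 3) :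
    HasCompactSupport (pder j f) :=
  hf.fderiv_apply ℝ _

lemma pder_mul {f h : E3 → ℝ} {x : E3} (hf : DifferentiableAt ℝ f x)
    (hh : DifferentiableAt ℝ h x) (j : Fin 3) :
    pder j (fun y => f y * h y) x = pder j f x * h x + f x * pder j h x := by
  simp [pder, fderiv_fun_mul hf hh]; ring

lemma pder_sum {ι : Type*} (s : Finset ι) {f : ι → E3 → ℝ} {x : E3}
    (h : ∀ i ∈ s, DifferentiableAt ℝ (f i) x) (j : Fin 3) :
    pder j (fun y => ∑ i ∈ s, f i y) x = ∑ i ∈ s, pder j (f i) x := by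
  simp [pder, fderiv_fun_sum h]

lemma pder_sq {f : E3 → ℝ} {x : E3} (hf : DifferentiableAt ℝ f x) (j : Fin 3) :
    pder j (fun y => f y ^ 2) x = 2 * f x * pder j f x := by
  have := pder_mul hf hf j
  simp only [← sq] at this
  rw [this]; ring

lemma hcs_sum {ι : Type*} (s : Finset ι) {f : ι → E3 → ℝ}
    (h : ∀ i ∈ s, HasCompactSupport (f i)) :
    HasCompactSupport (fun x => ∑ i ∈ s, f i x) := by
  classical
  induction s using Finset.cons_induction with
  | empty => simpa [Pi.zero_def] using HasCompactSupport.zero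
  | cons a s ha ih =>
    simp only [Finset.sum_cons]
    exact (h a (Finset.mem_cons_self a s)).add (ih fun i hi => h i (Finset.mem_cons_of_mem hi))

lemma coord_le_norm (z : E3) (i : Fin 3) : |z i| ≤ ‖z‖ := by
  rw [EuclideanSpace.norm_eq, ← Real.sqrt_sq_eq_abs]
  apply Real.sqrt_le_sqrt
  calc (z i)^2 = ‖z i‖^2 := by rw [Real.norm_eq_abs, sq_abs]
    _ ≤ ∑ j, ‖z j‖^2 := Finset.single_le_sum (f := fun j => ‖z j‖^2)
          (fun j _ => sq_nonneg _) (Finset.mem_univ i)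

lemma key_est (M : ℝ) (hM : 0 ≤ M) (u : Fin 3 → ℝ) (a : Fin 3 → Fin 3 → ℝ)
    (e : Fin 3 → Fin 3 → Fin 3 → ℝ) (hu : ∀ i, |u i| ≤ M)
    (F H : ℝ) (hF : F = ∑ i, ∑ j, (a i j)^2) (hH : H = ∑ i, ∑ j, ∑ k, (e i j k)^2) :
    (∑ i, ∑ j, -(u i * (e i j j * F^2 + a i j * (2 * F * (∑ p, ∑ q, 2 * a p q * e p q j)))))
      ≤ F^3/2 + 333^2/2 * M^2 * (F*H) := by
  have hF0 : 0 ≤ F := by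
    rw [hF]; positivity
  have hH0 : 0 ≤ H := by
    rw [hH]; positivity
  set p := Real.sqrt F with hp
  set s := Real.sqrt H with hs
  have hp0 : 0 ≤ p := Real.sqrt_nonneg _
  have hs0 : 0 ≤ s := Real.sqrt_nonneg _
  have hpF : p^2 = F := Real.sq_sqrt hF0
  have hsH : s^2 = H := Real.sq_sqrt hH0
  have ha : ∀ i j, |a i j| ≤ p := by
    intro i j
    rw [hp, ← Real.sqrt_sq_eq_abs]
    apply Real.sqrt_le_sqrt
    rw [hF]
    calc (a i j)^2 ≤ ∑ j', (a i j')^2 :=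
          Finset.single_le_sum (f := fun j' => (a i j')^2) (fun k _ => sq_nonneg _)
            (Finset.mem_univ j)
      _ ≤ ∑ i', ∑ j', (a i' j')^2 :=
          Finset.single_le_sum (f := fun i' => ∑ j', (a i' j')^2)
            (fun k _ => by positivity) (Finset.mem_univ i)
  have he : ∀ i j k, |e i j k| ≤ s := by
    intro i j k
    rw [hs, ← Real.sqrt_sq_eq_abs]
    apply Real.sqrt_le_sqrt
    rw [hH]
    calc (e i j k)^2 ≤ ∑ k', (e i j k')^2 :=
          Finset.single_le_sum (f := fun k' => (e i j k')^2) (fun m _ => sq_nonneg _)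
            (Finset.mem_univ k)
      _ ≤ ∑ j', ∑ k', (e i j' k')^2 :=
          Finset.single_le_sum (f := fun j' => ∑ k', (e i j' k')^2)
            (fun m _ => by positivity) (Finset.mem_univ j)
      _ ≤ ∑ i', ∑ j', ∑ k', (e i' j' k')^2 :=
          Finset.single_le_sum (f := fun i' => ∑ j', ∑ k', (e i' j' k')^2)
            (fun m _ => by positivity) (Finset.mem_univ i)
  have hw : ∀ j, |∑ p', ∑ q, 2 * a p' q * e p' q j| ≤ 18 * (p * s) := by
    intro j
    calc |∑ p', ∑ q, 2 * a p' q * e p' q j| ≤ ∑ p', |∑ q, 2 * a p' q * e p' q j| :=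
          Finset.abs_sum_le_sum_abs _ _
      _ ≤ ∑ p' : Fin 3, ∑ q : Fin 3, |2 * a p' q * e p' q j| :=
          Finset.sum_le_sum fun i _ => Finset.abs_sum_le_sum_abs _ _
      _ ≤ ∑ _p' : Fin 3, ∑ _q : Fin 3, 2 * (p * s) := by
          apply Finset.sum_le_sum; intro i _; apply Finset.sum_le_sum; intro q _
          rw [abs_mul, abs_mul, abs_two, mul_assoc]
          have : |a i q| * |e i q j| ≤ p * s :=
            mul_le_mul (ha i q) (he i q j) (abs_nonneg _) hp0
          linarith
      _ = 18 * (p * s) := by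
          simp only [Finset.sum_const, Finset.card_univ, Fintype.card_fin, nsmul_eq_mul]
          ring
  have hterm : ∀ i j, -(u i * (e i j j * F^2 + a i j * (2 * F * (∑ p', ∑ q, 2 * a p' q * e p' q j))))
      ≤ 37 * (M * (p^4 * s)) := by
    intro i j
    calc -(u i * (e i j j * F^2 + a i j * (2 * F * (∑ p', ∑ q, 2 * a p' q * e p' q j))))
        ≤ |u i * (e i j j * F^2 + a i j * (2 * F * (∑ p', ∑ q, 2 * a p' q * e p' q j)))| := by
          rw [← abs_neg]; exact le_abs_self _
      _ = |u i| * |e i j j * F^2 + a i j * (2 * F * (∑ p', ∑ q, 2 * a p' q * e p' q j))| :=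
          abs_mul _ _
      _ ≤ M * (|e i j j| * F^2 + |a i j| * (2 * F * |∑ p', ∑ q, 2 * a p' q * e p' q j|)) := by
          apply mul_le_mul (hu i) _ (abs_nonneg _) hM
          calc |e i j j * F^2 + a i j * (2 * F * (∑ p', ∑ q, 2 * a p' q * e p' q j))|
              ≤ |e i j j * F^2| + |a i j * (2 * F * (∑ p', ∑ q, 2 * a p' q * e p' q j))| :=
                abs_add_le _ _
            _ = |e i j j| * F^2 + |a i j| * (2 * F * |∑ p', ∑ q, 2 * a p' q * e p' q j|) := by
                rw [abs_mul, abs_mul, abs_mul, abs_mul, abs_two, abs_of_nonneg hF0,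
                  abs_of_nonneg (sq_nonneg F)]
      _ ≤ M * (s * F^2 + p * (2 * F * (18 * (p * s)))) := by
          gcongr
          · exact he i j j
          · exact ha i j
          · exact hw j
      _ = 37 * (M * (p^4 * s)) := by rw [← hpF]; ring
  calc (∑ i, ∑ j, -(u i * (e i j j * F^2 + a i j * (2 * F * (∑ p', ∑ q, 2 * a p' q * e p' q j)))))
      ≤ ∑ _i : Fin 3, ∑ _j : Fin 3, 37 * (M * (p^4 * s)) := by
        apply Finset.sum_le_sum; intro i _; apply Finset.sum_le_sum; intro j _; exact hterm i j
    _ = 333 * (M * (p^4 * s)) := by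
        simp only [Finset.sum_const, Finset.card_univ, Fintype.card_fin, nsmul_eq_mul]
        ring
    _ ≤ F^3/2 + 333^2/2 * M^2 * (F*H) := by
        rw [← hpF, ← hsH]
        nlinarith [sq_nonneg (p^3 - 333 * (M * (p * s))), sq_nonneg p, sq_nonneg s,
          mul_nonneg hp0 hs0, mul_nonneg (mul_nonneg hM hp0) hs0,
          mul_nonneg (mul_nonneg (mul_nonneg hM hp0) hp0) (mul_nonneg hp0 hs0)]

section Setup

variable {g : E3 → E3}

/-- First partial derivatives of the components of `g`. -/
def Dc (g : E3 → E3) (i j : Fin 3) : E3 → ℝ := pder j (fun y => g y i)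

/-- Second partial derivatives of the components of `g`. -/
def Dc2 (g : E3 → E3) (i j k : Fin 3) : E3 → ℝ := pder k (Dc g i j)

/-- The auxiliary function used in the integration by parts. -/
def qf (g : E3 → E3) (i j : Fin 3) : E3 → ℝ := fun y => Dc g i j y * (grad2 g y)^2

lemma grad2_eq (x : E3) : grad2 g x = ∑ i, ∑ j, (Dc g i j x)^2 := rfl

lemma hess2_eq (x : E3) : hess2 g x = ∑ i, ∑ j, ∑ k, (Dc2 g i j k x)^2 := rfl

lemma comp_contDiff (hg : ContDiff ℝ 2 g) (i : Fin 3) : ContDiff ℝ 2 (fun y => g y i) :=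
  (EuclideanSpace.proj (𝕜 := ℝ) i).contDiff.comp hg

lemma comp_hcs (hsupp : HasCompactSupport g) (i : Fin 3) :
    HasCompactSupport (fun y => g y i) :=
  hsupp.comp_left (g := fun z : E3 => z i) rfl

lemma Dc_contDiff (hg : ContDiff ℝ 2 g) (i j : Fin 3) : ContDiff ℝ 1 (Dc g i j) :=
  contDiff_pder_one (comp_contDiff hg i) j

lemma Dc_hcs (hsupp : HasCompactSupport g) (i j : Fin 3) : HasCompactSupport (Dc g i j) :=
  hcs_pder (comp_hcs hsupp i) j

lemma Dc2_cont (hg : ContDiff ℝ 2 g) (i j k : Fin 3) : Continuous (Dc2 g i j k) :=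
  continuous_pder (Dc_contDiff hg i j) k

lemma Dc2_hcs (hsupp : HasCompactSupport g) (i j k : Fin 3) :
    HasCompactSupport (Dc2 g i j k) :=
  hcs_pder (Dc_hcs hsupp i j) k

lemma grad2_contDiff (hg : ContDiff ℝ 2 g) : ContDiff ℝ 1 (grad2 g) := by
  show ContDiff ℝ 1 fun x => ∑ i : Fin 3, ∑ j : Fin 3, (Dc g i j x)^2
  exact ContDiff.sum fun i _ => ContDiff.sum fun j _ => (Dc_contDiff hg i j).pow 2

lemma grad2_hcs (hsupp : HasCompactSupport g) : HasCompactSupport (grad2 g) := by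
  show HasCompactSupport fun x => ∑ i : Fin 3, ∑ j : Fin 3, (Dc g i j x)^2
  exact hcs_sum _ fun i _ => hcs_sum _ fun j _ =>
    (Dc_hcs hsupp i j).comp_left (g := fun t : ℝ => t^2) (by norm_num)

lemma hess2_cont (hg : ContDiff ℝ 2 g) : Continuous (hess2 g) := by
  show Continuous fun x => ∑ i : Fin 3, ∑ j : Fin 3, ∑ k : Fin 3, (Dc2 g i j k x)^2
  exact continuous_finset_sum _ fun i _ => continuous_finset_sum _ fun j _ =>
    continuous_finset_sum _ fun k _ => (Dc2_cont hg i j k).pow 2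

lemma hess2_hcs (hsupp : HasCompactSupport g) : HasCompactSupport (hess2 g) := by
  show HasCompactSupport fun x => ∑ i : Fin 3, ∑ j : Fin 3, ∑ k : Fin 3, (Dc2 g i j k x)^2
  exact hcs_sum _ fun i _ => hcs_sum _ fun j _ => hcs_sum _ fun k _ =>
    (Dc2_hcs hsupp i j k).comp_left (g := fun t : ℝ => t^2) (by norm_num)

lemma pder_grad2 (hg : ContDiff ℝ 2 g) (k : Fin 3) (x : E3) :
    pder k (grad2 g) x = ∑ i, ∑ j, 2 * Dc g i j x * Dc2 g i j k x := by
  have hDd : ∀ i j, DifferentiableAt ℝ (Dc g i j) x := fun i j =>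
    ((Dc_contDiff hg i j).differentiable one_ne_zero).differentiableAt
  have h1 : grad2 g = fun y => ∑ i : Fin 3, ∑ j : Fin 3, (Dc g i j y)^2 := rfl
  rw [h1, pder_sum _ (fun i _ => DifferentiableAt.fun_sum fun j _ => (hDd i j).fun_pow 2) k]
  refine Finset.sum_congr rfl fun i _ => ?_
  rw [pder_sum _ (fun j _ => (hDd i j).fun_pow 2) k]
  refine Finset.sum_congr rfl fun j _ => ?_
  rw [pder_sq (hDd i j) k]
  rfl

lemma pder_qf (hg : ContDiff ℝ 2 g) (i j : Fin 3) (x : E3) :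
    pder j (qf g i j) x = Dc2 g i j j x * (grad2 g x)^2
      + Dc g i j x * (2 * grad2 g x * pder j (grad2 g) x) := by
  have hDd : DifferentiableAt ℝ (Dc g i j) x :=
    ((Dc_contDiff hg i j).differentiable one_ne_zero).differentiableAt
  have hFd : DifferentiableAt ℝ (grad2 g) x :=
    ((grad2_contDiff hg).differentiable one_ne_zero).differentiableAt
  have h1 : qf g i j = fun y => Dc g i j y * (fun z => (grad2 g z)^2) y := rfl
  rw [h1, pder_mul hDd (hFd.fun_pow 2) j, pder_sq hFd j]
  rfl

end Setup

/-- there is an absolute constant C > 0 such that for every M ≥ 0 and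
every C² compactly supported g : ℝ³ → ℝ³ with |g| ≤ M everywhere,
∫ |∇g|⁶ ≤ C M² ∫ |∇g|² |∇²g|². -/
theorem grad_sixth_power_bound :
    ∃ C : ℝ, 0 < C ∧ ∀ M : ℝ, 0 ≤ M →
      ∀ g : E3 → E3, ContDiff ℝ 2 g → HasCompactSupport g → (∀ x : E3, ‖g x‖ ≤ M) →
        ∫ x, (grad2 g x) ^ 3 ≤ C * M ^ 2 * ∫ x, grad2 g x * hess2 g x := by
  refine ⟨333^2, by norm_num, ?_⟩
  intro M hM g hg hsupp hbd
  -- basic regularity facts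
  have hDcont : ∀ i j, Continuous (Dc g i j) := fun i j => (Dc_contDiff hg i j).continuous
  have hDd : ∀ i j, Differentiable ℝ (Dc g i j) := fun i j =>
    (Dc_contDiff hg i j).differentiable one_ne_zero
  have hFcont : Continuous (grad2 g) := (grad2_contDiff hg).continuous
  have hFd : Differentiable ℝ (grad2 g) := (grad2_contDiff hg).differentiable one_ne_zero
  have hqC1 : ∀ i j, ContDiff ℝ 1 (qf g i j) := fun i j =>
    (Dc_contDiff hg i j).mul ((grad2_contDiff hg).pow 2)
  have hq'cont : ∀ i j, Continuous (pder j (qf g i j)) := fun i j =>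
    continuous_pder (hqC1 i j) j
  have hqcs : ∀ i j, HasCompactSupport (qf g i j) := fun i j =>
    (Dc_hcs hsupp i j).mul_right
  -- integrability facts
  have int_of : ∀ {h : E3 → ℝ}, Continuous h → HasCompactSupport h → Integrable h :=
    fun hc hcs => hc.integrable_of_hasCompactSupport hcs
  have intDq : ∀ i j, Integrable (fun x => Dc g i j x * qf g i j x) :=
    fun i j => int_of ((hDcont i j).mul ((hqC1 i j).continuous)) (Dc_hcs hsupp i j).mul_right
  have intfq' : ∀ i j, Integrable (fun x => g x i * pder j (qf g i j) x) :=
    fun i j => int_of (((EuclideanSpace.proj (𝕜 := ℝ) i).continuous.comp hg.continuous).mul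
      (hq'cont i j)) (comp_hcs hsupp i).mul_right
  have intfq : ∀ i j, Integrable (fun x => g x i * qf g i j x) :=
    fun i j => int_of (((EuclideanSpace.proj (𝕜 := ℝ) i).continuous.comp hg.continuous).mul
      ((hqC1 i j).continuous)) (comp_hcs hsupp i).mul_right
  have intDDF : ∀ i j, Integrable (fun x => (Dc g i j x)^2 * (grad2 g x)^2) :=
    fun i j => int_of (((hDcont i j).pow 2).mul (hFcont.pow 2))
      (((Dc_hcs hsupp i j).comp_left (g := fun t : ℝ => t^2) (by norm_num)).mul_right)
  have intF3 : Integrable (fun x => (grad2 g x)^3) :=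
    int_of (hFcont.pow 3) ((grad2_hcs hsupp).comp_left (g := fun t : ℝ => t^3) (by norm_num))
  have intFH : Integrable (fun x => grad2 g x * hess2 g x) :=
    int_of (hFcont.mul (hess2_cont hg)) (grad2_hcs hsupp).mul_right
  -- integration by parts for each pair (i, j)
  have hIBP : ∀ i j, ∫ x, (Dc g i j x)^2 * (grad2 g x)^2
      = ∫ x, -(g x i * pder j (qf g i j) x) := by
    intro i j
    have h0 : ∫ x, g x i * pder j (qf g i j) x
        = - ∫ x, Dc g i j x * qf g i j x := by
      exact integral_mul_fderiv_eq_neg_fderiv_mul_of_integrable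
        (f := fun y => g y i) (g := qf g i j) (v := EuclideanSpace.single j 1)
        (intDq i j) (intfq' i j) (intfq i j)
        (fun x _ => (((comp_contDiff hg i)).differentiable (by norm_num)) x)
        (fun x _ => ((hqC1 i j).differentiable one_ne_zero) x)
    have h1 : ∫ x, (Dc g i j x)^2 * (grad2 g x)^2 = ∫ x, Dc g i j x * qf g i j x := by
      refine integral_congr_ae (Filter.Eventually.of_forall fun x => ?_)
      show (Dc g i j x)^2 * (grad2 g x)^2 = Dc g i j x * (Dc g i j x * (grad2 g x)^2)
      ring
    rw [h1, integral_neg]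
    rw [h0]
    simp
  -- swapping finite sums and integrals
  have sum_int : ∀ (h : Fin 3 → Fin 3 → E3 → ℝ), (∀ i j, Integrable (h i j)) →
      ∫ x, ∑ i : Fin 3, ∑ j : Fin 3, h i j x = ∑ i : Fin 3, ∑ j : Fin 3, ∫ x, h i j x := by
    intro h hint
    rw [integral_finset_sum _ (fun i _ => integrable_finset_sum _ fun j _ => hint i j)]
    exact Finset.sum_congr rfl fun i _ => integral_finset_sum _ fun j _ => hint i j
  -- rewrite the left-hand side via integration by parts
  have hS : ∫ x, (grad2 g x)^3
      = ∫ x, ∑ i : Fin 3, ∑ j : Fin 3, -(g x i * pder j (qf g i j) x) := by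
    calc ∫ x, (grad2 g x)^3
        = ∫ x, ∑ i : Fin 3, ∑ j : Fin 3, (Dc g i j x)^2 * (grad2 g x)^2 := by
          refine integral_congr_ae (Filter.Eventually.of_forall fun x => ?_)
          show (grad2 g x)^3 = ∑ i : Fin 3, ∑ j : Fin 3, (Dc g i j x)^2 * (grad2 g x)^2
          rw [show (grad2 g x)^3
              = (∑ i : Fin 3, ∑ j : Fin 3, (Dc g i j x)^2) * (grad2 g x)^2 by
            rw [← grad2_eq (g := g) x]; ring]
          rw [Finset.sum_mul]
          exact Finset.sum_congr rfl fun i _ => Finset.sum_mul _ _ _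
      _ = ∑ i : Fin 3, ∑ j : Fin 3, ∫ x, (Dc g i j x)^2 * (grad2 g x)^2 :=
          sum_int _ intDDF
      _ = ∑ i : Fin 3, ∑ j : Fin 3, ∫ x, -(g x i * pder j (qf g i j) x) :=
          Finset.sum_congr rfl fun i _ => Finset.sum_congr rfl fun j _ => hIBP i j
      _ = ∫ x, ∑ i : Fin 3, ∑ j : Fin 3, -(g x i * pder j (qf g i j) x) :=
          (sum_int _ fun i j => (intfq' i j).neg).symm
  -- pointwise estimate
  have hpoint : ∀ x : E3, (∑ i : Fin 3, ∑ j : Fin 3, -(g x i * pder j (qf g i j) x))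
      ≤ (grad2 g x)^3/2 + 333^2/2 * M^2 * (grad2 g x * hess2 g x) := by
    intro x
    have hrw : ∀ i j : Fin 3, pder j (qf g i j) x
        = Dc2 g i j j x * (grad2 g x)^2 + Dc g i j x * (2 * grad2 g x *
            (∑ p : Fin 3, ∑ q : Fin 3, 2 * Dc g p q x * Dc2 g p q j x)) := fun i j => by
      rw [pder_qf hg i j x, pder_grad2 hg j x]
    calc (∑ i : Fin 3, ∑ j : Fin 3, -(g x i * pder j (qf g i j) x))
        = ∑ i : Fin 3, ∑ j : Fin 3, -(g x i * (Dc2 g i j j x * (grad2 g x)^2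
            + Dc g i j x * (2 * grad2 g x *
              (∑ p : Fin 3, ∑ q : Fin 3, 2 * Dc g p q x * Dc2 g p q j x)))) :=
          Finset.sum_congr rfl fun i _ => Finset.sum_congr rfl fun j _ => by rw [hrw i j]
      _ ≤ (grad2 g x)^3/2 + 333^2/2 * M^2 * (grad2 g x * hess2 g x) :=
          key_est M hM (fun i => g x i) (fun i j => Dc g i j x) (fun i j k => Dc2 g i j k x)
            (fun i => (coord_le_norm (g x) i).trans (hbd x)) (grad2 g x) (hess2 g x)
            (grad2_eq x) (hess2_eq x)
  -- combining
  have intS : Integrable (fun x => ∑ i : Fin 3, ∑ j : Fin 3, -(g x i * pder j (qf g i j) x)) :=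
    integrable_finset_sum _ fun i _ => integrable_finset_sum _ fun j _ => (intfq' i j).neg
  have intRHS : Integrable (fun x => (grad2 g x)^3/2 + 333^2/2 * M^2 * (grad2 g x * hess2 g x)) :=
    (intF3.div_const 2).add (intFH.const_mul _)
  have hmain : ∫ x, (grad2 g x)^3
      ≤ (∫ x, (grad2 g x)^3)/2 + 333^2/2 * M^2 * ∫ x, grad2 g x * hess2 g x := by
    calc ∫ x, (grad2 g x)^3
        = ∫ x, ∑ i : Fin 3, ∑ j : Fin 3, -(g x i * pder j (qf g i j) x) := hS
      _ ≤ ∫ x, ((grad2 g x)^3/2 + 333^2/2 * M^2 * (grad2 g x * hess2 g x)) :=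
          integral_mono intS intRHS hpoint
      _ = (∫ x, (grad2 g x)^3)/2 + 333^2/2 * M^2 * ∫ x, grad2 g x * hess2 g x := by
          rw [integral_add (intF3.div_const 2) (intFH.const_mul _), integral_div,
            integral_const_mul]
  linarith

end
end
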